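/- arXiv:1501.00333 — 2 statements merged into one kernel-verified Lean document; each statement's English description precedes it below -/
import Mathlib

section
/- Let A and B be graded C-algebras which are integral domains, M a torsion-free graded A-module, and N a torsion-free graded B-module. Then the Segre product M ⊠ N = ⊕_{d≥0} M_d ⊗_C N_d is a torsion-free module over the domain A ⊠ B. -/
open TensorProduct

/-- The degree-`d` piece of a Segre product of two graded modules (or algebras),
realized inside the tensor product over `ℂ`. -/
noncomputable def segrePiece {M N : Type} [AddCommGroup M] [AddCommGroup N]
    [Module ℂ M] [Module ℂ N]
    (ℳ : ℕ → Submodule ℂ M) (𝒩 : ℕ → Submodule ℂ N) (d : ℕ) :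
    Submodule ℂ (M ⊗[ℂ] N) :=
  Submodule.span ℂ {z : M ⊗[ℂ] N | ∃ m ∈ ℳ d, ∃ n ∈ 𝒩 d, z = m ⊗ₜ[ℂ] n}

/-- The natural action of `A ⊗[ℂ] B` on `M ⊗[ℂ] N`, as a bilinear map:
`(a ⊗ b) • (m ⊗ n) = (a • m) ⊗ (b • n)`. -/
noncomputable def segreAct (A B M N : Type) [CommRing A] [CommRing B]
    [Algebra ℂ A] [Algebra ℂ B] [AddCommGroup M] [AddCommGroup N]
    [Module ℂ M] [Module ℂ N] [Module A M] [Module B N]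
    [IsScalarTower ℂ A M] [IsScalarTower ℂ B N]
    [SMulCommClass ℂ A M] [SMulCommClass ℂ B N] :
    (A ⊗[ℂ] B) →ₗ[ℂ] (M ⊗[ℂ] N) →ₗ[ℂ] (M ⊗[ℂ] N) :=
  (TensorProduct.homTensorHomMap (RingHom.id ℂ) M N M N).comp
    (TensorProduct.map (Algebra.lsmul ℂ ℂ M : A →ₐ[ℂ] Module.End ℂ M).toLinearMap
      (Algebra.lsmul ℂ ℂ N : B →ₐ[ℂ] Module.End ℂ N).toLinearMap)


/-- Nullstellensatz-style: a finitely generated `ℂ`-algebra domain has enough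
characters to separate nonzero elements. -/
theorem exists_char (R : Type*) [CommRing R] [Algebra ℂ R] [IsDomain R]
    [Algebra.FiniteType ℂ R] (a : R) (ha : a ≠ 0) :
    ∃ φ : R →ₐ[ℂ] ℂ, φ a ≠ 0 := by
  haveI : IsJacobsonRing R := isJacobsonRing_of_finiteType (A := ℂ)
  have hbot : ((⊥ : Ideal R).jacobson) = ⊥ :=
    isJacobsonRing_iff_prime_eq.mp ‹_› ⊥ Ideal.bot_prime
  have : a ∉ ((⊥ : Ideal R).jacobson) := by rw [hbot]; simpa using ha
  rw [Ideal.jacobson, Ideal.mem_sInf] at this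
  push_neg at this
  obtain ⟨m, ⟨-, hmmax⟩, ham⟩ := this
  haveI := hmmax
  letI : Field (R ⧸ m) := Ideal.Quotient.field m
  haveI : Algebra.FiniteType ℂ (R ⧸ m) :=
    Algebra.FiniteType.of_surjective (Ideal.Quotient.mkₐ ℂ m)
      (Ideal.Quotient.mkₐ_surjective ℂ m)
  haveI : Module.Finite ℂ (R ⧸ m) := finite_of_finite_type_of_isJacobsonRing ℂ (R ⧸ m)
  haveI : Algebra.IsIntegral ℂ (R ⧸ m) := Algebra.IsIntegral.of_finite ℂ (R ⧸ m)
  have hsurj : Function.Surjective (algebraMap ℂ (R ⧸ m)) :=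
    IsAlgClosed.algebraMap_bijective_of_isIntegral.2
  have hbij : Function.Bijective (Algebra.ofId ℂ (R ⧸ m)) :=
    ⟨fun x y h => by
      have := congrArg id h
      exact (algebraMap ℂ (R ⧸ m)).injective h, hsurj⟩
  let e : ℂ ≃ₐ[ℂ] (R ⧸ m) := AlgEquiv.ofBijective _ hbij
  refine ⟨(e.symm : (R ⧸ m) →ₐ[ℂ] ℂ).comp (Ideal.Quotient.mkₐ ℂ m), ?_⟩
  intro h0
  have : (Ideal.Quotient.mkₐ ℂ m) a = 0 := by
    have := congrArg e h0
    simpa using this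
  exact ham (by rwa [Ideal.Quotient.mkₐ_eq_mk, Ideal.Quotient.eq_zero_iff_mem] at this)

set_option maxHeartbeats 1000000 in
/-- Over `ℂ`, the tensor product of two integral domains has no zero divisors. -/
theorem tensor_domain (A B : Type*) [CommRing A] [CommRing B] [Algebra ℂ A] [Algebra ℂ B]
    [IsDomain A] [IsDomain B] (x y : A ⊗[ℂ] B) (hxy : x * y = 0) : x = 0 ∨ y = 0 := by
  by_contra hcon
  push_neg at hcon
  obtain ⟨hx, hy⟩ := hcon
  classical
  set κ := Module.Basis.ofVectorSpaceIndex ℂ B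
  set e : Module.Basis κ ℂ B := Module.Basis.ofVectorSpace ℂ B with he
  let T : A ⊗[ℂ] B ≃ₗ[ℂ] (κ →₀ A) :=
    (TensorProduct.congr (LinearEquiv.refl ℂ A) e.repr).trans
      (TensorProduct.finsuppScalarRight ℂ ℂ A κ)
  have hTsymm : ∀ (j : κ) (a : A), T.symm (Finsupp.single j a) = a ⊗ₜ[ℂ] e j := by
    intro j a
    show (TensorProduct.congr (LinearEquiv.refl ℂ A) e.repr).symm
      ((TensorProduct.finsuppScalarRight ℂ ℂ A κ).symm (Finsupp.single j a)) = _
    rw [TensorProduct.finsuppScalarRight_symm_apply_single, TensorProduct.congr_symm_tmul]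
    simp [Module.Basis.repr_symm_single_one]
  have hrecon : ∀ w : A ⊗[ℂ] B, w = (T w).sum fun j a => a ⊗ₜ[ℂ] e j := by
    intro w
    conv_lhs => rw [← T.symm_apply_apply w, ← Finsupp.sum_single (T w)]
    rw [map_finsuppSum]
    exact Finsupp.sum_congr fun j _ => hTsymm j _
  set cx := T x with hcx
  set cy := T y with hcy
  have hcx0 : cx ≠ 0 := fun h => hx (by
    have := congrArg T.symm h
    rwa [T.symm_apply_apply, map_zero] at this)
  have hcy0 : cy ≠ 0 := fun h => hy (by
    have := congrArg T.symm h
    rwa [T.symm_apply_apply, map_zero] at this)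
  obtain ⟨j0, hj0⟩ := Finsupp.ne_iff.mp hcx0
  obtain ⟨j1, hj1⟩ := Finsupp.ne_iff.mp hcy0
  simp only [Finsupp.coe_zero, Pi.zero_apply] at hj0 hj1
  set s : Finset A := cx.support.image cx ∪ cy.support.image cy with hs
  set A'' := Algebra.adjoin ℂ (↑s : Set A) with hA''
  haveI : Algebra.FiniteType ℂ A'' :=
    (Subalgebra.fg_iff_finiteType _).mp (Subalgebra.fg_adjoin_finset s)
  have hmemx : ∀ j, cx j ∈ A'' := by
    intro j
    by_cases hj : j ∈ cx.support
    · exact Algebra.subset_adjoin (by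
        simp only [hs, Finset.coe_union, Set.mem_union]
        exact Or.inl (by exact_mod_cast Finset.mem_image_of_mem cx hj))
    · rw [Finsupp.notMem_support_iff.mp hj]; exact zero_mem _
  have hmemy : ∀ j, cy j ∈ A'' := by
    intro j
    by_cases hj : j ∈ cy.support
    · exact Algebra.subset_adjoin (by
        simp only [hs, Finset.coe_union, Set.mem_union]
        exact Or.inr (by exact_mod_cast Finset.mem_image_of_mem cy hj))
    · rw [Finsupp.notMem_support_iff.mp hj]; exact zero_mem _
  set x'' : A'' ⊗[ℂ] B := ∑ j ∈ cx.support, (⟨cx j, hmemx j⟩ : A'') ⊗ₜ[ℂ] e j with hx''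
  set y'' : A'' ⊗[ℂ] B := ∑ j ∈ cy.support, (⟨cy j, hmemy j⟩ : A'') ⊗ₜ[ℂ] e j with hy''
  let ι : A'' ⊗[ℂ] B →ₐ[ℂ] A ⊗[ℂ] B :=
    Algebra.TensorProduct.map (A''.val) (AlgHom.id ℂ B)
  have hιx : ι x'' = x := by
    rw [hx'', map_sum]
    conv_rhs => rw [hrecon x]
    rw [Finsupp.sum]
    exact Finset.sum_congr rfl fun j _ => by simp [ι, hcx]
  have hιy : ι y'' = y := by
    rw [hy'', map_sum]
    conv_rhs => rw [hrecon y]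
    rw [Finsupp.sum]
    exact Finset.sum_congr rfl fun j _ => by simp [ι, hcy]
  have hιlin : (ι : A'' ⊗[ℂ] B → A ⊗[ℂ] B) =
      LinearMap.rTensor B (A''.val.toLinearMap) := by
    have : ι.toLinearMap = LinearMap.rTensor B (A''.val.toLinearMap) :=
      TensorProduct.ext' fun a b => by simp [ι, LinearMap.rTensor]
    exact congrArg (fun f : _ →ₗ[ℂ] _ => ⇑f) this
  have hinj : Function.Injective ι := by
    show Function.Injective (ι : A'' ⊗[ℂ] B → A ⊗[ℂ] B)
    rw [hιlin]
    exact Module.Flat.rTensor_preserves_injective_linearMap (M := B) (A''.val.toLinearMap) Subtype.val_injective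
  have hxy'' : x'' * y'' = 0 := hinj (by rw [map_mul, hιx, hιy, hxy, map_zero])
  -- characters
  have key : ∀ φ : A'' →ₐ[ℂ] ℂ,
      φ ((⟨cx j0, hmemx j0⟩ : A'') * ⟨cy j1, hmemy j1⟩) = 0 := by
    intro φ
    let χ : A'' ⊗[ℂ] B →ₐ[ℂ] B :=
      Algebra.TensorProduct.lift ((Algebra.ofId ℂ B).comp φ) (AlgHom.id ℂ B)
        fun _ _ => Commute.all _ _
    have hχx : χ x'' = ∑ j ∈ cx.support, φ ⟨cx j, hmemx j⟩ • e j := by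
      rw [hx'', map_sum]
      exact Finset.sum_congr rfl fun j _ => by
        simp [χ, Algebra.TensorProduct.lift_tmul, Algebra.ofId_apply, Algebra.smul_def]
    have hχy : χ y'' = ∑ j ∈ cy.support, φ ⟨cy j, hmemy j⟩ • e j := by
      rw [hy'', map_sum]
      exact Finset.sum_congr rfl fun j _ => by
        simp [χ, Algebra.TensorProduct.lift_tmul, Algebra.ofId_apply, Algebra.smul_def]
    have hprod : χ x'' * χ y'' = 0 := by rw [← map_mul, hxy'', map_zero]
    have li := linearIndependent_iff'.mp e.linearIndependent
    rw [map_mul]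
    rcases mul_eq_zero.mp hprod with h | h
    · have : φ ⟨cx j0, hmemx j0⟩ = 0 :=
        li cx.support _ (by rw [← hχx, h]) j0 (Finsupp.mem_support_iff.mpr hj0)
      rw [this, zero_mul]
    · have : φ ⟨cy j1, hmemy j1⟩ = 0 :=
        li cy.support _ (by rw [← hχy, h]) j1 (Finsupp.mem_support_iff.mpr hj1)
      rw [this, mul_zero]
  have hzero : ((⟨cx j0, hmemx j0⟩ : A'') * ⟨cy j1, hmemy j1⟩) = 0 := by
    by_contra hne
    obtain ⟨φ, hφ⟩ := exists_char A'' _ hne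
    exact hφ (key φ)
  have : cx j0 * cy j1 = 0 := by
    have := congrArg (Subtype.val) hzero
    simpa using this
  rcases mul_eq_zero.mp this with h | h
  · exact hj0 h
  · exact hj1 h

theorem segreAct_tmul (A B M N : Type) [CommRing A] [CommRing B]
    [Algebra ℂ A] [Algebra ℂ B] [AddCommGroup M] [AddCommGroup N]
    [Module ℂ M] [Module ℂ N] [Module A M] [Module B N]
    [IsScalarTower ℂ A M] [IsScalarTower ℂ B N]
    [SMulCommClass ℂ A M] [SMulCommClass ℂ B N]
    (a : A) (b : B) (m : M) (n : N) :
    segreAct A B M N (a ⊗ₜ[ℂ] b) (m ⊗ₜ[ℂ] n) = (a • m) ⊗ₜ[ℂ] (b • n) := by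
  simp [segreAct]

set_option maxHeartbeats 1000000 in
theorem segre_torsionfree_aux
    (A B M N : Type) [CommRing A] [CommRing B] [Algebra ℂ A] [Algebra ℂ B]
    [IsDomain A] [IsDomain B]
    [AddCommGroup M] [AddCommGroup N] [Module ℂ M] [Module ℂ N]
    [Module A M] [Module B N] [IsScalarTower ℂ A M] [IsScalarTower ℂ B N]
    [SMulCommClass ℂ A M] [SMulCommClass ℂ B N]
    (hMtf : ∀ (a : A) (m : M), a • m = 0 → a = 0 ∨ m = 0)
    (hNtf : ∀ (b : B) (n : N), b • n = 0 → b = 0 ∨ n = 0) :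
    ∀ r : A ⊗[ℂ] B, ∀ z : M ⊗[ℂ] N,
        segreAct A B M N r z = 0 → r = 0 ∨ z = 0 := by
  classical
  intro r z hact
  by_cases hr : r = 0
  · exact Or.inl hr
  right
  set K := FractionRing A
  set L := FractionRing B
  let fM : M →ₗ[A] K ⊗[A] M := TensorProduct.mk A K M 1
  let fN : N →ₗ[B] L ⊗[B] N := TensorProduct.mk B L N 1
  haveI : IsLocalizedModule (nonZeroDivisors A) fM :=
    (isLocalizedModule_iff_isBaseChange (nonZeroDivisors A) K fM).mpr
      (TensorProduct.isBaseChange A M K)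
  haveI : IsLocalizedModule (nonZeroDivisors B) fN :=
    (isLocalizedModule_iff_isBaseChange (nonZeroDivisors B) L fN).mpr
      (TensorProduct.isBaseChange B N L)
  have hfM : Function.Injective fM := by
    intro m1 m2 h
    rw [← sub_eq_zero, ← map_sub] at h
    obtain ⟨s, hs⟩ := (IsLocalizedModule.eq_zero_iff (nonZeroDivisors A) fM).mp h
    rw [Submonoid.smul_def] at hs
    rcases hMtf _ _ hs with h' | h'
    · exact absurd h' (nonZeroDivisors.coe_ne_zero s)
    · exact sub_eq_zero.mp h'
  have hfN : Function.Injective fN := by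
    intro m1 m2 h
    rw [← sub_eq_zero, ← map_sub] at h
    obtain ⟨s, hs⟩ := (IsLocalizedModule.eq_zero_iff (nonZeroDivisors B) fN).mp h
    rw [Submonoid.smul_def] at hs
    rcases hNtf _ _ hs with h' | h'
    · exact absurd h' (nonZeroDivisors.coe_ne_zero s)
    · exact sub_eq_zero.mp h'
  let ιA : A →ₗ[ℂ] K := (IsScalarTower.toAlgHom ℂ A K).toLinearMap
  let ιB : B →ₗ[ℂ] L := (IsScalarTower.toAlgHom ℂ B L).toLinearMap
  let E1 : A ⊗[ℂ] B →ₗ[ℂ] K ⊗[ℂ] L := TensorProduct.map ιA ιB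
  let fMc : M →ₗ[ℂ] K ⊗[A] M := fM.restrictScalars ℂ
  let fNc : N →ₗ[ℂ] L ⊗[B] N := fN.restrictScalars ℂ
  let E2 : M ⊗[ℂ] N →ₗ[ℂ] (K ⊗[A] M) ⊗[ℂ] (L ⊗[B] N) := TensorProduct.map fMc fNc
  have hE1 : Function.Injective E1 := by
    have h : E1 = (ιB.lTensor K).comp (ιA.rTensor B) := TensorProduct.ext' fun a b => rfl
    rw [h]
    exact (Module.Flat.lTensor_preserves_injective_linearMap (M := K) ιB
        (IsFractionRing.injective B L)).comp
      (Module.Flat.rTensor_preserves_injective_linearMap (M := B) ιA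
        (IsFractionRing.injective A K))
  have hE2 : Function.Injective E2 := by
    have h : E2 = (fNc.lTensor (K ⊗[A] M)).comp (fMc.rTensor N) :=
      TensorProduct.ext' fun m n => rfl
    rw [h]
    exact (Module.Flat.lTensor_preserves_injective_linearMap (M := K ⊗[A] M) fNc hfN).comp
      (Module.Flat.rTensor_preserves_injective_linearMap (M := N) fMc hfM)
  have hcompat : ∀ (x : A ⊗[ℂ] B) (w : M ⊗[ℂ] N),
      E2 (segreAct A B M N x w) =
        segreAct K L (K ⊗[A] M) (L ⊗[B] N) (E1 x) (E2 w) := by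
    intro x w
    induction x using TensorProduct.induction_on with
    | zero => simp
    | add x₁ x₂ h₁ h₂ => simp only [map_add, LinearMap.add_apply, h₁, h₂]
    | tmul a b =>
      induction w using TensorProduct.induction_on with
      | zero => simp
      | add w₁ w₂ h₁ h₂ => simp only [map_add, h₁, h₂]
      | tmul m n =>
        rw [segreAct_tmul]
        have e1 : E1 (a ⊗ₜ[ℂ] b) = (algebraMap A K a) ⊗ₜ[ℂ] (algebraMap B L b) := by
          simp [E1, ιA, ιB]
        have e2 : E2 (m ⊗ₜ[ℂ] n) = ((1 : K) ⊗ₜ[A] m) ⊗ₜ[ℂ] ((1 : L) ⊗ₜ[B] n) := by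
          simp only [E2, TensorProduct.map_tmul]; rfl
        have e3 : E2 ((a • m) ⊗ₜ[ℂ] (b • n)) =
            ((1 : K) ⊗ₜ[A] (a • m)) ⊗ₜ[ℂ] ((1 : L) ⊗ₜ[B] (b • n)) := by
          simp only [E2, TensorProduct.map_tmul]; rfl
        rw [e1, e2, e3, segreAct_tmul]
        congr 1
        · rw [TensorProduct.smul_tmul', Algebra.smul_def, mul_one, ← TensorProduct.smul_tmul,
            Algebra.algebraMap_eq_smul_one, algebraMap_smul]
        · rw [TensorProduct.smul_tmul', Algebra.smul_def, mul_one, ← TensorProduct.smul_tmul,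
            Algebra.algebraMap_eq_smul_one, algebraMap_smul]
  -- coordinates w.r.t. bases of the vector spaces
  let bV := Module.Basis.ofVectorSpace K (K ⊗[A] M)
  let bW := Module.Basis.ofVectorSpace L (L ⊗[B] N)
  let Φ : (K ⊗[A] M) ⊗[ℂ] (L ⊗[B] N) ≃ₗ[ℂ]
      (Module.Basis.ofVectorSpaceIndex K (K ⊗[A] M) × Module.Basis.ofVectorSpaceIndex L (L ⊗[B] N)) →₀
        K ⊗[ℂ] L :=
    (TensorProduct.congr (bV.repr.restrictScalars ℂ) (bW.repr.restrictScalars ℂ)).trans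
      (finsuppTensorFinsupp ℂ ℂ K L _ _)
  have hkey : ∀ (x : K ⊗[ℂ] L) (w : (K ⊗[A] M) ⊗[ℂ] (L ⊗[B] N)) (p),
      Φ (segreAct K L (K ⊗[A] M) (L ⊗[B] N) x w) p = x * Φ w p := by
    intro x w p
    induction x using TensorProduct.induction_on with
    | zero => simp
    | add x₁ x₂ h₁ h₂ => simp only [map_add, LinearMap.add_apply, h₁, h₂, add_mul,
        Finsupp.add_apply]
    | tmul k l =>
      induction w using TensorProduct.induction_on with
      | zero => simp
      | add w₁ w₂ h₁ h₂ => simp only [map_add, h₁, h₂, mul_add, Finsupp.add_apply]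
      | tmul v u =>
        rw [segreAct_tmul]
        obtain ⟨i, j⟩ := p
        have hΦ : ∀ (v' : K ⊗[A] M) (u' : L ⊗[B] N),
            Φ (v' ⊗ₜ[ℂ] u') (i, j) = (bV.repr v' i) ⊗ₜ[ℂ] (bW.repr u' j) := by
          intro v' u'
          simp [Φ, finsuppTensorFinsupp_apply]
        rw [hΦ, hΦ, map_smul, map_smul, Finsupp.smul_apply, Finsupp.smul_apply,
          smul_eq_mul, smul_eq_mul, Algebra.TensorProduct.tmul_mul_tmul]
  -- conclude
  have hE1r : E1 r ≠ 0 := fun h => hr (hE1 (by rw [h, map_zero]))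
  have hz0 : segreAct K L (K ⊗[A] M) (L ⊗[B] N) (E1 r) (E2 z) = 0 := by
    rw [← hcompat, hact, map_zero]
  have hΦz : Φ (E2 z) = 0 := by
    ext p
    have h0 : E1 r * Φ (E2 z) p = 0 := by
      rw [← hkey (E1 r) (E2 z) p, hz0]
      simp
    rcases tensor_domain K L _ _ h0 with h | h
    · exact absurd h hE1r
    · simpa using h
  have hEz : E2 z = 0 := Φ.map_eq_zero_iff.mp hΦz
  exact hE2 (by rw [hEz, map_zero])

/-- If `A`, `B` are graded `ℂ`-algebras which are integral domains,
`M` a torsion-free graded `A`-module and `N` a torsion-free graded `B`-module,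
then the Segre product `M ⊠ N = ⊕_d M_d ⊗ N_d` is a torsion-free module over
the domain `A ⊠ B = ⊕_d A_d ⊗ B_d`: no nonzero element of `M ⊠ N` is killed by
a nonzero element of `A ⊠ B`. -/
theorem segreProduct_module_torsionFree
    (A B M N : Type) [CommRing A] [CommRing B] [Algebra ℂ A] [Algebra ℂ B]
    [IsDomain A] [IsDomain B]
    [AddCommGroup M] [AddCommGroup N] [Module ℂ M] [Module ℂ N]
    [Module A M] [Module B N] [IsScalarTower ℂ A M] [IsScalarTower ℂ B N]
    [SMulCommClass ℂ A M] [SMulCommClass ℂ B N]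
    (𝒜 : ℕ → Submodule ℂ A) (ℬ : ℕ → Submodule ℂ B)
    [GradedAlgebra 𝒜] [GradedAlgebra ℬ]
    (ℳ : ℕ → Submodule ℂ M) (𝒩 : ℕ → Submodule ℂ N)
    (hM : DirectSum.IsInternal ℳ) (hN : DirectSum.IsInternal 𝒩)
    (hMgr : ∀ (d e : ℕ) (a : A) (m : M), a ∈ 𝒜 d → m ∈ ℳ e → a • m ∈ ℳ (d + e))
    (hNgr : ∀ (d e : ℕ) (b : B) (n : N), b ∈ ℬ d → n ∈ 𝒩 e → b • n ∈ 𝒩 (d + e))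
    (hMtf : ∀ (a : A) (m : M), a • m = 0 → a = 0 ∨ m = 0)
    (hNtf : ∀ (b : B) (n : N), b • n = 0 → b = 0 ∨ n = 0) :
    ∀ r : A ⊗[ℂ] B, r ∈ (⨆ d : ℕ, segrePiece 𝒜 ℬ d) →
      ∀ z : M ⊗[ℂ] N, z ∈ (⨆ d : ℕ, segrePiece ℳ 𝒩 d) →
        segreAct A B M N r z = 0 → r = 0 ∨ z = 0 := by
  intro r _ z _ hact
  exact segre_torsionfree_aux A B M N hMtf hNtf r z hact
end

section
/- Let A and B be finitely generated graded C-algebras, M a finitely generated graded A-module, and N a finitely generated graded B-module. Then M ⊠ N = ⊕_{d≥0} M_d ⊗_C N_d is a finitely generated module over the Segre product A ⊠ B. -/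
open TensorProduct

lemma pwo_exists_finset_basis {α : Type*} [PartialOrder α] {S : Set α} (h : S.IsPWO) :
    ∃ G : Finset α, ↑G ⊆ S ∧ ∀ x ∈ S, ∃ g ∈ G, g ≤ x := by
  classical
  set Min : Set α := {x | x ∈ S ∧ ∀ y ∈ S, y ≤ x → y = x} with hMinDef
  have hanti : IsAntichain (· ≤ ·) Min := by
    rintro x ⟨hxS, hxmin⟩ y ⟨hyS, hymin⟩ hne hle
    exact hne (hymin x hxS hle)
  have hfin : Min.Finite := by
    refine hanti.finite_of_partiallyWellOrderedOn (h.mono ?_)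
    intro x hx; exact hx.1
  have hbasis : ∀ x ∈ S, ∃ g ∈ Min, g ≤ x := by
    intro x hx
    refine Set.WellFoundedOn.induction h.isWF hx (P := fun x => ∃ g ∈ Min, g ≤ x) ?_
    intro y hy ih
    by_cases hmin : ∀ z ∈ S, z ≤ y → z = y
    · exact ⟨y, ⟨hy, hmin⟩, le_rfl⟩
    · push_neg at hmin
      obtain ⟨z, hzS, hzle, hzne⟩ := hmin
      obtain ⟨g, hg, hgle⟩ := ih z hzS (lt_of_le_of_ne hzle hzne)
      exact ⟨g, hg, hgle.trans hzle⟩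
  refine ⟨hfin.toFinset, ?_, ?_⟩
  · intro x hx
    rw [Finset.mem_coe, Set.Finite.mem_toFinset] at hx
    exact hx.1
  · intro x hx
    obtain ⟨g, hg, hgle⟩ := hbasis x hx
    exact ⟨g, hfin.mem_toFinset.2 hg, hgle⟩

lemma tmul_mem_span_image2 {M N : Type} [AddCommGroup M] [AddCommGroup N]
    [Module ℂ M] [Module ℂ N]
    {S : Set M} {T : Set N} {x : M} {y : N}
    (hx : x ∈ Submodule.span ℂ S) (hy : y ∈ Submodule.span ℂ T) :
    x ⊗ₜ[ℂ] y ∈ Submodule.span ℂ (Set.image2 (· ⊗ₜ[ℂ] ·) S T) := by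
  induction hx using Submodule.span_induction with
  | mem x hxS =>
    induction hy using Submodule.span_induction with
    | mem y hyT => exact Submodule.subset_span (Set.mem_image2_of_mem hxS hyT)
    | zero => rw [tmul_zero]; exact zero_mem _
    | add y z _ _ ihy ihz => rw [tmul_add]; exact add_mem ihy ihz
    | smul c y _ ih => rw [tmul_smul]; exact Submodule.smul_mem _ c ih
  | zero => rw [zero_tmul]; exact zero_mem _
  | add x z _ _ ih1 ih2 => rw [add_tmul]; exact add_mem ih1 ih2
  | smul c x _ ih => rw [← smul_tmul']; exact Submodule.smul_mem _ c ih


set_option synthInstance.maxHeartbeats 1000000 in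
set_option maxHeartbeats 1000000 in
lemma exists_homog_word_span
    (A M : Type) [CommRing A] [Algebra ℂ A] [AddCommGroup M] [Module ℂ M]
    [Module A M] [IsScalarTower ℂ A M] [SMulCommClass ℂ A M]
    (𝒜 : ℕ → Submodule ℂ A) [GradedAlgebra 𝒜]
    (hA : Algebra.FiniteType ℂ A)
    (ℳ : ℕ → Submodule ℂ M) (hM : DirectSum.IsInternal ℳ)
    (hMgr : ∀ (d e : ℕ) (a : A) (m : M), a ∈ 𝒜 d → m ∈ ℳ e → a • m ∈ ℳ (d + e))
    (hMfg : Module.Finite A M) :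
    ∃ (p r : ℕ) (a : Fin p → A) (α : Fin p → ℕ) (m : Fin r → M) (μ : Fin r → ℕ),
      (∀ i, a i ∈ 𝒜 (α i)) ∧ (∀ k, m k ∈ ℳ (μ k)) ∧
      ∀ d : ℕ, (ℳ d : Set M) ⊆ Submodule.span ℂ
        { w : M | ∃ (u : Fin p → ℕ) (k : Fin r),
            ((∑ i, u i * α i) + μ k = d) ∧ w = (∏ i, a i ^ u i) • m k } := by
  classical
  letI := hM.chooseDecomposition
  -- homogeneous algebra generators
  obtain ⟨sA, hsA⟩ := hA.out
  set tA : Finset A := sA.biUnion (fun x =>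
    (DirectSum.decompose 𝒜 x).support.image (fun d => (DirectSum.decompose 𝒜 x d : A))) with htA
  have htA_hom : ∀ y ∈ tA, ∃ d, y ∈ 𝒜 d := by
    intro y hy
    rw [htA, Finset.mem_biUnion] at hy
    obtain ⟨x, -, hy⟩ := hy
    rw [Finset.mem_image] at hy
    obtain ⟨d, -, rfl⟩ := hy
    exact ⟨d, SetLike.coe_mem _⟩
  have hadjA : Algebra.adjoin ℂ (↑tA : Set A) = ⊤ := by
    rw [eq_top_iff, ← hsA]
    refine Algebra.adjoin_le ?_
    intro x hx
    rw [← DirectSum.sum_support_decompose 𝒜 x]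
    refine Subalgebra.sum_mem _ ?_
    intro d hd
    refine Algebra.subset_adjoin ?_
    rw [htA, Finset.mem_coe, Finset.mem_biUnion]
    exact ⟨x, hx, Finset.mem_image.2 ⟨d, hd, rfl⟩⟩
  -- enumerate
  let p := tA.card
  let ea := tA.equivFin
  let a : Fin p → A := fun i => (ea.symm i : A)
  have haT : ∀ i, a i ∈ tA := fun i => (ea.symm i).2
  have hrangea : Set.range a = ↑tA := by
    ext x
    constructor
    · rintro ⟨i, rfl⟩; exact (ea.symm i).2
    · intro hx; exact ⟨ea ⟨x, hx⟩, by simp [a]⟩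
  let α : Fin p → ℕ := fun i => (htA_hom (a i) (haT i)).choose
  have ha : ∀ i, a i ∈ 𝒜 (α i) := fun i => (htA_hom (a i) (haT i)).choose_spec
  -- monomials span A over ℂ
  let monoSet : Set A := {y : A | ∃ u : Fin p → ℕ, y = ∏ i, a i ^ u i}
  have hmul_mono : ∀ u u' : Fin p → ℕ,
      (∏ i, a i ^ u i) * (∏ i, a i ^ u' i) = ∏ i, a i ^ (u i + u' i) := by
    intro u u'
    rw [← Finset.prod_mul_distrib]
    refine Finset.prod_congr rfl ?_
    intros; rw [pow_add]
  let monoSubmonoid : Submonoid A :=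
    { carrier := monoSet
      one_mem' := ⟨0, by simp⟩
      mul_mem' := by
        rintro x y ⟨u, rfl⟩ ⟨u', rfl⟩
        exact ⟨fun i => u i + u' i, by rw [hmul_mono]⟩ }
  have hmonoA : ∀ x : A, x ∈ Submodule.span ℂ monoSet := by
    intro x
    have hx : x ∈ Subalgebra.toSubmodule (Algebra.adjoin ℂ (Set.range a)) := by
      rw [hrangea, hadjA]; trivial
    rw [Algebra.adjoin_eq_span] at hx
    refine Submodule.span_mono ?_ hx
    have hcl : Submonoid.closure (Set.range a) ≤ monoSubmonoid := by
      refine Submonoid.closure_le.2 ?_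
      rintro x ⟨i, rfl⟩
      refine ⟨fun j => if j = i then 1 else 0, ?_⟩
      rw [Finset.prod_eq_single i (fun j _ hji => by simp [hji]) (by simp)]
      simp
    exact hcl
  -- homogeneous module generators
  obtain ⟨sM, hsM⟩ := hMfg.fg_top
  set tM : Finset M := sM.biUnion (fun x =>
    (DirectSum.decompose ℳ x).support.image (fun d => (DirectSum.decompose ℳ x d : M))) with htM
  have htM_hom : ∀ y ∈ tM, ∃ d, y ∈ ℳ d := by
    intro y hy
    rw [htM, Finset.mem_biUnion] at hy
    obtain ⟨x, -, hy⟩ := hy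
    rw [Finset.mem_image] at hy
    obtain ⟨d, -, rfl⟩ := hy
    exact ⟨d, SetLike.coe_mem _⟩
  have hspanM : Submodule.span A (↑tM : Set M) = ⊤ := by
    rw [eq_top_iff, ← hsM]
    refine Submodule.span_le.2 ?_
    intro x hx
    rw [← DirectSum.sum_support_decompose ℳ x]
    refine Submodule.sum_mem _ ?_
    intro d hd
    refine Submodule.subset_span ?_
    rw [htM, Finset.mem_coe, Finset.mem_biUnion]
    exact ⟨x, hx, Finset.mem_image.2 ⟨d, hd, rfl⟩⟩
  let r := tM.card
  let em := tM.equivFin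
  let m : Fin r → M := fun k => (em.symm k : M)
  have hmT : ∀ k, m k ∈ tM := fun k => (em.symm k).2
  have hrangem : Set.range m = ↑tM := by
    ext x
    constructor
    · rintro ⟨k, rfl⟩; exact (em.symm k).2
    · intro hx; exact ⟨em ⟨x, hx⟩, by simp [m]⟩
  let μ : Fin r → ℕ := fun k => (htM_hom (m k) (hmT k)).choose
  have hm : ∀ k, m k ∈ ℳ (μ k) := fun k => (htM_hom (m k) (hmT k)).choose_spec
  refine ⟨p, r, a, α, m, μ, ha, hm, ?_⟩
  -- words span M over ℂ
  set Wall : Set M := {w : M | ∃ (u : Fin p → ℕ) (k : Fin r), w = (∏ i, a i ^ u i) • m k}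
    with hWallDef
  have hsmul_word : ∀ w ∈ Wall, ∀ c : A, c • w ∈ Submodule.span ℂ Wall := by
    rintro w ⟨u, k, rfl⟩ c
    let φ : A →ₗ[ℂ] M :=
      { toFun := fun y => y • ((∏ i, a i ^ u i) • m k)
        map_add' := fun y z => add_smul y z _
        map_smul' := fun r y => smul_assoc r y _ }
    have h1 : φ c ∈ Submodule.span ℂ (φ '' monoSet) :=
      Submodule.apply_mem_span_image_of_mem_span φ (hmonoA c)
    refine Submodule.span_le.2 ?_ h1
    rintro _ ⟨y, ⟨u', rfl⟩, rfl⟩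
    refine Submodule.subset_span ⟨fun i => u' i + u i, k, ?_⟩
    show (∏ i, a i ^ u' i) • ((∏ i, a i ^ u i) • m k) = _
    rw [← mul_smul, hmul_mono]
  have hA_smul : ∀ (c : A), ∀ x ∈ Submodule.span ℂ Wall, c • x ∈ Submodule.span ℂ Wall := by
    intro c x hx
    induction hx using Submodule.span_induction with
    | mem w hw => exact hsmul_word w hw c
    | zero => simpa using zero_mem (Submodule.span ℂ Wall)
    | add x y _ _ ih1 ih2 => simpa [smul_add] using add_mem ih1 ih2
    | smul t x _ ih =>
      rw [← smul_comm t c x]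
      exact Submodule.smul_mem _ t ih
  have hall : ∀ x : M, x ∈ Submodule.span ℂ Wall := by
    let SW : Submodule A M :=
      { carrier := (Submodule.span ℂ Wall : Set M)
        add_mem' := fun h1 h2 => add_mem h1 h2
        zero_mem' := zero_mem _
        smul_mem' := fun c x hx => hA_smul c x hx }
    have htop : (⊤ : Submodule A M) ≤ SW := by
      rw [← hspanM]
      refine Submodule.span_le.2 ?_
      rw [← hrangem]
      rintro _ ⟨k, rfl⟩
      exact Submodule.subset_span ⟨0, k, by simp⟩
    intro x
    exact htop trivial
  -- degreewise refinement
  intro d x hx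
  let π : M →ₗ[ℂ] M :=
    { toFun := fun x => (DirectSum.decompose ℳ x d : M)
      map_add' := by intros; simp
      map_smul' := by intros; simp [DirectSum.decompose_smul, DirectSum.smul_apply, DFinsupp.smul_apply] }
  have hπx : π x = x := DirectSum.decompose_of_mem_same ℳ hx
  have h1 : π x ∈ Submodule.span ℂ (π '' Wall) :=
    Submodule.apply_mem_span_image_of_mem_span π (hall x)
  rw [hπx] at h1
  refine Submodule.span_le.2 ?_ h1
  rintro _ ⟨w, ⟨u, k, rfl⟩, rfl⟩
  have hwmem : (∏ i, a i ^ u i) • m k ∈ ℳ ((∑ i, u i * α i) + μ k) := by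
    refine hMgr _ _ _ _ ?_ (hm k)
    have := SetLike.prod_pow_mem_graded 𝒜 α a (F := Finset.univ) u (fun i _ => ha i)
    simpa [smul_eq_mul] using this
  by_cases hd : (∑ i, u i * α i) + μ k = d
  · have : π ((∏ i, a i ^ u i) • m k) = (∏ i, a i ^ u i) • m k := by
      refine DirectSum.decompose_of_mem_same ℳ ?_
      exact hd ▸ hwmem
    rw [this]
    exact Submodule.subset_span ⟨u, k, hd, rfl⟩
  · have : π ((∏ i, a i ^ u i) • m k) = 0 :=
      DirectSum.decompose_of_mem_ne ℳ hwmem hd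
    rw [this]
    exact zero_mem _

/-- If `A`, `B` are finitely generated graded `ℂ`-algebras, `M` a
finitely generated graded `A`-module and `N` a finitely generated graded
`B`-module, then the Segre product `M ⊠ N = ⊕_d M_d ⊗ N_d` is a finitely
generated module over the Segre product `A ⊠ B = ⊕_d A_d ⊗ B_d`: there is a
finite subset `s` of `M ⊠ N` such that every element of `M ⊠ N` lies in the
`ℂ`-span of `(A ⊠ B) • s`. -/
theorem segreProduct_module_finite
    (A B M N : Type) [CommRing A] [CommRing B] [Algebra ℂ A] [Algebra ℂ B]
    [AddCommGroup M] [AddCommGroup N] [Module ℂ M] [Module ℂ N]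
    [Module A M] [Module B N] [IsScalarTower ℂ A M] [IsScalarTower ℂ B N]
    [SMulCommClass ℂ A M] [SMulCommClass ℂ B N]
    (𝒜 : ℕ → Submodule ℂ A) (ℬ : ℕ → Submodule ℂ B)
    [GradedAlgebra 𝒜] [GradedAlgebra ℬ]
    (hA : Algebra.FiniteType ℂ A) (hB : Algebra.FiniteType ℂ B)
    (ℳ : ℕ → Submodule ℂ M) (𝒩 : ℕ → Submodule ℂ N)
    (hM : DirectSum.IsInternal ℳ) (hN : DirectSum.IsInternal 𝒩)
    (hMgr : ∀ (d e : ℕ) (a : A) (m : M), a ∈ 𝒜 d → m ∈ ℳ e → a • m ∈ ℳ (d + e))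
    (hNgr : ∀ (d e : ℕ) (b : B) (n : N), b ∈ ℬ d → n ∈ 𝒩 e → b • n ∈ 𝒩 (d + e))
    (hMfg : Module.Finite A M) (hNfg : Module.Finite B N) :
    ∃ s : Finset (M ⊗[ℂ] N), (↑s : Set (M ⊗[ℂ] N)) ⊆ (⨆ d : ℕ, segrePiece ℳ 𝒩 d) ∧
      (⨆ d : ℕ, segrePiece ℳ 𝒩 d) ≤ Submodule.span ℂ
        (Set.image2 (fun r z => segreAct A B M N r z)
          ((⨆ d : ℕ, segrePiece 𝒜 ℬ d : Submodule ℂ (A ⊗[ℂ] B)) : Set (A ⊗[ℂ] B))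
          (↑s : Set (M ⊗[ℂ] N))) := by
  classical
  obtain ⟨p, r, a, α, m, μ, ha, hm, hspanM⟩ :=
    exists_homog_word_span A M 𝒜 hA ℳ hM hMgr hMfg
  obtain ⟨q, t, b, β, n, ν, hb, hn, hspanN⟩ :=
    exists_homog_word_span B N ℬ hB 𝒩 hN hNgr hNfg
  -- abbreviations
  set monoA : (Fin p → ℕ) → A := fun u => ∏ i, a i ^ u i with hmonoA
  set monoB : (Fin q → ℕ) → B := fun v => ∏ j, b j ^ v j with hmonoB
  set wordM : (Fin p → ℕ) → Fin r → M := fun u k => monoA u • m k with hwordM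
  set wordN : (Fin q → ℕ) → Fin t → N := fun v l => monoB v • n l with hwordN
  set dM : (Fin p → ℕ) → Fin r → ℕ := fun u k => (∑ i, u i * α i) + μ k with hdM
  set dN : (Fin q → ℕ) → Fin t → ℕ := fun v l => (∑ j, v j * β j) + ν l with hdN
  have hmonoA_mem : ∀ u, monoA u ∈ 𝒜 (∑ i, u i * α i) := by
    intro u
    have := SetLike.prod_pow_mem_graded 𝒜 α a (F := Finset.univ) u (fun i _ => ha i)
    simpa [smul_eq_mul] using this
  have hmonoB_mem : ∀ v, monoB v ∈ ℬ (∑ j, v j * β j) := by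
    intro v
    have := SetLike.prod_pow_mem_graded ℬ β b (F := Finset.univ) v (fun j _ => hb j)
    simpa [smul_eq_mul] using this
  have hwordM_mem : ∀ u k, wordM u k ∈ ℳ (dM u k) :=
    fun u k => hMgr _ _ _ _ (hmonoA_mem u) (hm k)
  have hwordN_mem : ∀ v l, wordN v l ∈ 𝒩 (dN v l) :=
    fun v l => hNgr _ _ _ _ (hmonoB_mem v) (hn l)
  have hmulA : ∀ u u' : Fin p → ℕ, monoA u * monoA u' = monoA (u + u') := by
    intro u u'
    rw [hmonoA, ← Finset.prod_mul_distrib]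
    refine Finset.prod_congr rfl ?_
    intros; rw [← pow_add]; rfl
  have hmulB : ∀ v v' : Fin q → ℕ, monoB v * monoB v' = monoB (v + v') := by
    intro v v'
    rw [hmonoB, ← Finset.prod_mul_distrib]
    refine Finset.prod_congr rfl ?_
    intros; rw [← pow_add]; rfl
  -- the key degree sets and Dickson's lemma
  have hpwo : ∀ kl : Fin r × Fin t,
      ({uv : (Fin p → ℕ) × (Fin q → ℕ) | dM uv.1 kl.1 = dN uv.2 kl.2}).IsPWO := by
    intro kl
    haveI : IsWellOrder ℕ (· < ·) := inferInstance
    have h1 : (Set.univ : Set (Fin p → ℕ)).IsPWO := by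
      simpa using Set.IsPWO.pi (s := fun _ : Fin p => (Set.univ : Set ℕ)) (fun _ => Set.IsPWO.of_linearOrder _)
    have h2 : (Set.univ : Set (Fin q → ℕ)).IsPWO := by
      simpa using Set.IsPWO.pi (s := fun _ : Fin q => (Set.univ : Set ℕ)) (fun _ => Set.IsPWO.of_linearOrder _)
    have huniv : (Set.univ : Set ((Fin p → ℕ) × (Fin q → ℕ))).IsPWO := by
      simpa [Set.univ_prod_univ] using h1.prod h2
    exact huniv.mono (Set.subset_univ _)
  choose G hGsub hGmin using fun kl => pwo_exists_finset_basis (hpwo kl)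
  set s : Finset (M ⊗[ℂ] N) := Finset.univ.biUnion (fun kl : Fin r × Fin t =>
    (G kl).image (fun uv => wordM uv.1 kl.1 ⊗ₜ[ℂ] wordN uv.2 kl.2)) with hs
  have hs_mem : ∀ (kl : Fin r × Fin t), ∀ uv ∈ G kl,
      wordM uv.1 kl.1 ⊗ₜ[ℂ] wordN uv.2 kl.2 ∈ s := by
    intro kl uv huv
    rw [hs, Finset.mem_biUnion]
    exact ⟨kl, Finset.mem_univ _, Finset.mem_image.2 ⟨uv, huv, rfl⟩⟩
  refine ⟨s, ?_, ?_⟩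
  · -- s ⊆ ⨆ segrePiece ℳ 𝒩
    intro z hz
    rw [Finset.mem_coe, hs, Finset.mem_biUnion] at hz
    obtain ⟨kl, -, hz⟩ := hz
    rw [Finset.mem_image] at hz
    obtain ⟨uv, huv, rfl⟩ := hz
    have hdeg : dM uv.1 kl.1 = dN uv.2 kl.2 := hGsub kl (Finset.mem_coe.2 huv)
    have : wordM uv.1 kl.1 ⊗ₜ[ℂ] wordN uv.2 kl.2 ∈ segrePiece ℳ 𝒩 (dM uv.1 kl.1) := by
      refine Submodule.subset_span ?_
      exact ⟨wordM uv.1 kl.1, hwordM_mem _ _, wordN uv.2 kl.2, hdeg ▸ hwordN_mem _ _, rfl⟩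
    simp only [Set.iSup_eq_iUnion, Set.mem_iUnion]
    exact ⟨dM uv.1 kl.1, this⟩
  · refine iSup_le fun d => ?_
    rw [segrePiece]
    refine Submodule.span_le.2 ?_
    rintro z ⟨x, hx, y, hy, rfl⟩
    have hx' := hspanM d hx
    have hy' := hspanN d hy
    have hz : x ⊗ₜ[ℂ] y ∈ Submodule.span ℂ (Set.image2 (· ⊗ₜ[ℂ] ·)
        { w : M | ∃ (u : Fin p → ℕ) (k : Fin r), ((∑ i, u i * α i) + μ k = d) ∧
            w = (∏ i, a i ^ u i) • m k }
        { w : N | ∃ (v : Fin q → ℕ) (l : Fin t), ((∑ j, v j * β j) + ν l = d) ∧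
            w = (∏ j, b j ^ v j) • n l }) := tmul_mem_span_image2 hx' hy'
    refine Submodule.span_le.2 ?_ hz
    rintro _ ⟨w1, ⟨u, k, hud, rfl⟩, w2, ⟨v, l, hvd, rfl⟩, rfl⟩
    have hud' : dM u k = d := hud
    have hvd' : dN v l = d := hvd
    obtain ⟨g, hgG, hgle⟩ := hGmin (k, l) (u, v) (by simp only [Set.mem_setOf_eq]; rw [hud', hvd'])
    have hgSig : dM g.1 k = dN g.2 l := hGsub (k, l) (Finset.mem_coe.2 hgG)
    -- complementary exponents
    set w : Fin p → ℕ := fun i => u i - g.1 i with hw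
    set w' : Fin q → ℕ := fun j => v j - g.2 j with hw'
    have hu : g.1 + w = u := funext fun i => Nat.add_sub_cancel' (hgle.1 i)
    have hv : g.2 + w' = v := funext fun j => Nat.add_sub_cancel' (hgle.2 j)
    set e : ℕ := ∑ i, w i * α i with he
    set e' : ℕ := ∑ j, w' j * β j with he'
    have hde : (∑ i, g.1 i * α i) + μ k + e = d := by
      have h1 : (∑ i, u i * α i) + μ k = d := hud'
      have hsplit : (∑ i, u i * α i) = (∑ i, g.1 i * α i) + e := by
        rw [he, ← Finset.sum_add_distrib]
        refine Finset.sum_congr rfl ?_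
        intro i _
        exact ((congrArg (fun z => z * α i) (congrFun hu i)).symm).trans (add_mul _ _ _)
      omega
    have hde' : (∑ j, g.2 j * β j) + ν l + e' = d := by
      have h1 : (∑ j, v j * β j) + ν l = d := hvd'
      have hsplit : (∑ j, v j * β j) = (∑ j, g.2 j * β j) + e' := by
        rw [he', ← Finset.sum_add_distrib]
        refine Finset.sum_congr rfl ?_
        intro j _
        exact ((congrArg (fun z => z * β j) (congrFun hv j)).symm).trans (add_mul _ _ _)
      omega
    have hgSigdeg : (∑ i, g.1 i * α i) + μ k = (∑ j, g.2 j * β j) + ν l := hgSig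
    have hee : e = e' := by omega
    -- the acting element
    have hr_mem : monoA w ⊗ₜ[ℂ] monoB w' ∈
        (⨆ d : ℕ, segrePiece 𝒜 ℬ d : Submodule ℂ (A ⊗[ℂ] B)) := by
      refine le_iSup (fun d => segrePiece 𝒜 ℬ d) e ?_
      refine Submodule.subset_span ?_
      exact ⟨monoA w, hmonoA_mem w, monoB w', by rw [hee]; exact hmonoB_mem w', rfl⟩
    have hz₀_mem : wordM g.1 k ⊗ₜ[ℂ] wordN g.2 l ∈ (↑s : Set (M ⊗[ℂ] N)) :=
      Finset.mem_coe.2 (hs_mem (k, l) g hgG)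
    have hkey : segreAct A B M N (monoA w ⊗ₜ[ℂ] monoB w') (wordM g.1 k ⊗ₜ[ℂ] wordN g.2 l)
        = ((∏ i, a i ^ u i) • m k) ⊗ₜ[ℂ] ((∏ j, b j ^ v j) • n l) := by
      have h1 : segreAct A B M N (monoA w ⊗ₜ[ℂ] monoB w') (wordM g.1 k ⊗ₜ[ℂ] wordN g.2 l)
          = (monoA w • wordM g.1 k) ⊗ₜ[ℂ] (monoB w' • wordN g.2 l) := by
        simp [segreAct]
      rw [h1, hwordM, hwordN, ← mul_smul, ← mul_smul, hmulA, hmulB]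
      rw [show w + g.1 = u from (add_comm g.1 w) ▸ hu, show w' + g.2 = v from (add_comm g.2 w') ▸ hv]
    refine Submodule.subset_span ?_
    have hmem2 := Set.mem_image2_of_mem (f := fun r z => segreAct A B M N r z) hr_mem hz₀_mem
    simp only at hmem2 ⊢
    rw [hkey] at hmem2
    exact hmem2
end
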